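/- Bounded downward ratios for weighted bond animals (Proposition 3.5, bond-animal case on Z^d): Let d ≥ 2 and let wt be a weight function satisfying (CA2) on the class of bond animals on Z^d, with size measured by the number of sites. Set 𝒢_n = Σ_{G ∈ C*_n} wt(G). Then there exists a constant Υ > 0 such that 𝒢_{n+1} ≥ Υ · 𝒢_n for all sufficiently large n. -/

import Mathlib

open Filter

/-- A site of the `d`-dimensional hypercubic lattice. -/
abbrev Site (d : ℕ) := Fin d → ℤ

/-- A (pre)graph in `ℤ^d`: a finite set of sites together with a finite set of
(unordered) bonds.  No conditions are imposed at this stage; this is also used as a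
container for the two parts of a pattern, and for the set `D` of Axiom (CA4). -/
structure PreGraph (d : ℕ) where
  sites : Finset (Site d)
  bonds : Finset (Sym2 (Site d))

/-- `b` is a bond of the hypercubic lattice `ℤ^d`: an unordered pair `{x,y}` with
`‖x - y‖₁ = 1`. -/
def IsLatticeBond {d : ℕ} (b : Sym2 (Site d)) : Prop :=
  ∃ x y : Site d, b = s(x, y) ∧ (∑ i, |x i - y i|) = 1

/-- Adjacency inside the graph `G`. -/
def Adj {d : ℕ} (G : PreGraph d) (x y : Site d) : Prop := s(x, y) ∈ G.bonds

/-- `G` is a (bond) animal with respect to the set of allowed lattice bonds `Bd`: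
a finite nonempty connected subgraph of the lattice whose bond set is `Bd`. -/
def IsAnimalOn {d : ℕ} (Bd : Sym2 (Site d) → Prop) (G : PreGraph d) : Prop :=
  G.sites.Nonempty ∧
  (∀ b ∈ G.bonds, Bd b) ∧
  (∀ b ∈ G.bonds, ∀ x ∈ b, x ∈ G.sites) ∧
  (∀ x ∈ G.sites, ∀ y ∈ G.sites, Relation.ReflTransGen (Adj G) x y)

/-- A bond animal on the hypercubic lattice `ℤ^d`. -/
def IsBondAnimal {d : ℕ} (G : PreGraph d) : Prop := IsAnimalOn IsLatticeBond G

/-- `G` contains a cycle: there are `n ≥ 3` distinct sites arranged cyclically with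
consecutive ones joined by bonds of `G`. -/
def HasCycle {d : ℕ} (G : PreGraph d) : Prop :=
  ∃ (n : ℕ) (f : ZMod n → Site d), 3 ≤ n ∧ Function.Injective f ∧
    ∀ i : ZMod n, s(f i, f (i + 1)) ∈ G.bonds

/-- A bond tree: a bond animal containing no cycles. -/
def IsBondTree {d : ℕ} (G : PreGraph d) : Prop := IsBondAnimal G ∧ ¬ HasCycle G

/-- A site animal: a bond animal containing every lattice bond both of whose
endpoints are sites of the animal. -/
def IsSiteAnimal {d : ℕ} (G : PreGraph d) : Prop :=
  IsBondAnimal G ∧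
  ∀ b : Sym2 (Site d), IsLatticeBond b → (∀ x ∈ b, x ∈ G.sites) → b ∈ G.bonds

/-- The translateCluster `G + u`. -/
def translateCluster {d : ℕ} (G : PreGraph d) (u : Site d) : PreGraph d :=
  ⟨G.sites.image (· + u), G.bonds.image (Sym2.map (· + u))⟩

/-- `G` contains the pattern `(P₁, P₂)`: all sites and bonds of `P₁` belong to `G`,
and no site or bond of `P₂` belongs to `G`. -/
def ContainsPattern {d : ℕ} (G P₁ P₂ : PreGraph d) : Prop :=
  P₁.sites ⊆ G.sites ∧ P₁.bonds ⊆ G.bonds ∧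
  (∀ x ∈ P₂.sites, x ∉ G.sites) ∧ (∀ b ∈ P₂.bonds, b ∉ G.bonds)

/-- `(P₁, P₂)` is a pattern: `P₁` and `P₂` are (finite) disjoint sets of sites and
bonds, with `P₁` nonempty. -/
def IsPattern {d : ℕ} (P₁ P₂ : PreGraph d) : Prop :=
  (P₁.sites.Nonempty ∨ P₁.bonds.Nonempty) ∧
  Disjoint P₁.sites P₂.sites ∧ Disjoint P₁.bonds P₂.bonds

/-- `(P₁, P₂)` is a proper pattern for the class `C` of clusters: for infinitely
many `n`, some cluster in `C` of size `n` contains the pattern. -/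
def ProperFor {d : ℕ} (C : PreGraph d → Prop) (P₁ P₂ : PreGraph d) : Prop :=
  {n : ℕ | ∃ G : PreGraph d, C G ∧ G.sites.card = n ∧ ContainsPattern G P₁ P₂}.Infinite

/-- `|τ_P(G)|`: the number of translates of the pattern `(P₁, P₂)` occurring in `G`. -/
noncomputable def patternCount {d : ℕ} (P₁ P₂ G : PreGraph d) : ℕ :=
  {x : Site d | ContainsPattern G (translateCluster P₁ x) (translateCluster P₂ x)}.ncard

/-- Lexicographic (strict) order on sites. -/
def LexLt {d : ℕ} (x y : Site d) : Prop :=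
  ∃ i : Fin d, (∀ j, j < i → x j = y j) ∧ x i < y i

/-- The lexicographically smallest site of `G` is the origin. -/
def LexMinAtOrigin {d : ℕ} (G : PreGraph d) : Prop :=
  (0 : Site d) ∈ G.sites ∧ ∀ x ∈ G.sites, x = 0 ∨ LexLt 0 x

/-- `C*_n` for the class `C`: clusters in `C` of size `n` (number of sites) whose
lexicographically smallest site is the origin; one representative per translation
class. -/
def Cstar {d : ℕ} (C : PreGraph d → Prop) (n : ℕ) : Set (PreGraph d) :=
  {G | C G ∧ G.sites.card = n ∧ LexMinAtOrigin G}

open scoped ENNReal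

/-- Axiom (CA2) for an `ℝ≥0∞`-valued weight function on the class `C`. -/
def CA2 {d : ℕ} (C : PreGraph d → Prop) (wt : PreGraph d → ℝ≥0∞) : Prop :=
  ∀ m : ℕ, ∃ γ : ℝ≥0∞, γ ≠ 0 ∧ γ ≠ ⊤ ∧
    ∀ G G' : PreGraph d, C G → C G' →
      (symmDiff G.sites G'.sites).card + (symmDiff G.bonds G'.bonds).card ≤ m →
      wt G / γ ≤ wt G' ∧ wt G' ≤ γ * wt G

/-- A weight function on the class `C`: positive and finite on clusters,
translation invariant, and satisfying (CA2). -/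
def IsWeight {d : ℕ} (C : PreGraph d → Prop) (wt : PreGraph d → ℝ≥0∞) : Prop :=
  (∀ G, C G → wt G ≠ 0 ∧ wt G ≠ ⊤) ∧
  (∀ (G : PreGraph d) (u : Site d), wt (translateCluster G u) = wt G) ∧
  CA2 C wt

/-- Weighted sum of a set of clusters (`ℝ≥0∞`-valued weights). -/
noncomputable def Gsum {d : ℕ} (S : Set (PreGraph d)) (wt : PreGraph d → ℝ≥0∞) : ℝ≥0∞ :=
  ∑' G : S, wt G

/-- Weighted sum of a set of clusters (real-valued weights). -/
noncomputable def GsumR {d : ℕ} (S : Set (PreGraph d)) (f : PreGraph d → ℝ) : ℝ :=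
  ∑' G : S, f G

/-- `mono(G)`: the number of lattice bonds not in `G` with both endpoints in `G`. -/
noncomputable def monoCount {d : ℕ} (G : PreGraph d) : ℕ :=
  {b : Sym2 (Site d) | IsLatticeBond b ∧ b ∉ G.bonds ∧ ∀ x ∈ b, x ∈ G.sites}.ncard

/-- `solv(G)`: the number of lattice bonds not in `G` with exactly one endpoint in `G`. -/
noncomputable def solvCount {d : ℕ} (G : PreGraph d) : ℕ :=
  {b : Sym2 (Site d) | IsLatticeBond b ∧ b ∉ G.bonds ∧
    ∃ x y : Site d, b = s(x, y) ∧ x ∈ G.sites ∧ y ∉ G.sites}.ncard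


section Aux

variable {d : ℕ}

/-- The first coordinate vector. -/
def e1 (d : ℕ) : Site d := fun i => if (i : ℕ) = 0 then 1 else 0

/-- Adding a new site (the origin) to a translated animal. -/
def addOne (d : ℕ) (G : PreGraph d) : PreGraph d :=
  ⟨insert 0 (G.sites.image (· + e1 d)),
   insert s((0 : Site d), e1 d) (G.bonds.image (Sym2.map (· + e1 d)))⟩

lemma addE1_injective : Function.Injective (· + e1 d) := fun _ _ h => by
  simpa using congrArg (· - e1 d) h

lemma adj_symm {G : PreGraph d} {x y : Site d} (h : Adj G x y) : Adj G y x := by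
  unfold Adj at *; rwa [Sym2.eq_swap]

lemma lattice_bond_translate {b : Sym2 (Site d)} (u : Site d) (hb : IsLatticeBond b) :
    IsLatticeBond (Sym2.map (· + u) b) := by
  obtain ⟨x, y, rfl, hsum⟩ := hb
  refine ⟨x + u, y + u, by simp, ?_⟩
  simpa [Pi.add_apply, add_sub_add_right_eq_sub] using hsum

lemma translate_isBondAnimal {G : PreGraph d} (u : Site d) (hG : IsBondAnimal G) :
    IsBondAnimal (translateCluster G u) := by
  obtain ⟨hne, hlat, hend, hconn⟩ := hG
  refine ⟨hne.image _, ?_, ?_, ?_⟩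
  · intro b hb
    simp only [translateCluster, Finset.mem_image] at hb
    obtain ⟨b₀, hb₀, rfl⟩ := hb
    exact lattice_bond_translate u (hlat _ hb₀)
  · intro b hb x hx
    simp only [translateCluster, Finset.mem_image] at hb ⊢
    obtain ⟨b₀, hb₀, rfl⟩ := hb
    rw [Sym2.mem_map] at hx
    obtain ⟨w, hw, rfl⟩ := hx
    exact ⟨w, hend _ hb₀ _ hw, rfl⟩
  · intro x hx y hy
    simp only [translateCluster, Finset.mem_image] at hx hy
    obtain ⟨x₀, hx₀, rfl⟩ := hx
    obtain ⟨y₀, hy₀, rfl⟩ := hy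
    refine Relation.ReflTransGen.lift (· + u) (fun a b hab => ?_) _ _ (hconn _ hx₀ _ hy₀)
    simp only [Adj, translateCluster, Finset.mem_image]
    exact ⟨s(a, b), hab, Sym2.map_pair_eq _ _ _⟩

lemma coord_nonneg {G : PreGraph d} (hd : 0 < d) (hG : LexMinAtOrigin G)
    {x : Site d} (hx : x ∈ G.sites) : 0 ≤ x ⟨0, hd⟩ := by
  rcases hG.2 x hx with rfl | ⟨i, hj, hi⟩
  · exact le_refl _
  · by_cases h : i = ⟨0, hd⟩
    · subst h; exact le_of_lt hi
    · have hv : (⟨0, hd⟩ : Fin d) < i := by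
        rcases Nat.eq_zero_or_pos i.val with h0 | h0
        · exact absurd (Fin.ext h0) h
        · exact h0
      have := hj _ hv
      simp only [Pi.zero_apply] at this
      omega

lemma neg_e1_not_mem {G : PreGraph d} (hd : 0 < d) (hG : LexMinAtOrigin G) :
    -e1 d ∉ G.sites := by
  intro h
  have := coord_nonneg hd hG h
  simp [e1, Pi.neg_apply] at this

lemma zero_not_mem_image {G : PreGraph d} (hd : 0 < d) (hG : LexMinAtOrigin G) :
    (0 : Site d) ∉ G.sites.image (· + e1 d) := by
  intro h
  rw [Finset.mem_image] at h
  obtain ⟨x, hx, hx0⟩ := h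
  have : x = -e1 d := by
    have := congrArg (· - e1 d) hx0; simpa [sub_eq_iff_eq_add] using this
  exact neg_e1_not_mem hd hG (this ▸ hx)

lemma bond_not_mem_image {G : PreGraph d} (hd : 0 < d) (hG : IsBondAnimal G)
    (hmin : LexMinAtOrigin G) :
    s((0 : Site d), e1 d) ∉ G.bonds.image (Sym2.map (· + e1 d)) := by
  intro h
  rw [Finset.mem_image] at h
  obtain ⟨b, hb, hbe⟩ := h
  have h0 : (0 : Site d) ∈ Sym2.map (· + e1 d) b := by rw [hbe]; simp
  rw [Sym2.mem_map] at h0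
  obtain ⟨w, hw, hw0⟩ := h0
  have hwe : w = -e1 d := by
    have := congrArg (· - e1 d) hw0; simpa [sub_eq_iff_eq_add] using this
  exact neg_e1_not_mem hd hmin (hwe ▸ hG.2.2.1 _ hb _ hw)

lemma lexlt_add {G : PreGraph d} (hd : 0 < d) (hG : LexMinAtOrigin G)
    {x : Site d} (hx : x ∈ G.sites) : LexLt 0 (x + e1 d) := by
  refine ⟨⟨0, hd⟩, fun j hj => absurd hj (by simp [Fin.lt_def]), ?_⟩
  have h1 : e1 d ⟨0, hd⟩ = 1 := by simp [e1]
  have := coord_nonneg hd hG hx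
  simp only [Pi.zero_apply, Pi.add_apply, h1]
  omega

lemma e1_lattice (hd : 0 < d) : IsLatticeBond (s((0 : Site d), e1 d)) := by
  refine ⟨0, e1 d, rfl, ?_⟩
  have : ∀ i : Fin d, |(0 : Site d) i - e1 d i| = if (i : ℕ) = 0 then 1 else 0 := by
    intro i; by_cases h : (i : ℕ) = 0 <;> simp [e1, h]
  rw [Finset.sum_congr rfl (fun i _ => this i)]
  have h2 : ∀ i : Fin d, (if (i : ℕ) = 0 then (1:ℤ) else 0) = if i = ⟨0, hd⟩ then 1 else 0 := by
    intro i
    by_cases h : i = ⟨0, hd⟩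
    · subst h; simp
    · have : (i : ℕ) ≠ 0 := fun h0 => h (Fin.ext h0)
      simp [this, h]
  rw [Finset.sum_congr rfl (fun i _ => h2 i), Finset.sum_ite_eq']
  simp

lemma addOne_isBondAnimal {G : PreGraph d} (hd : 0 < d) (hG : IsBondAnimal G)
    (hmin : LexMinAtOrigin G) : IsBondAnimal (addOne d G) := by
  obtain ⟨hne, hlat, hend, hconn⟩ := hG
  have h0G : (0 : Site d) ∈ G.sites := hmin.1
  refine ⟨⟨0, Finset.mem_insert_self _ _⟩, ?_, ?_, ?_⟩
  · intro b hb
    rcases Finset.mem_insert.mp hb with rfl | hb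
    · exact e1_lattice hd
    · rw [Finset.mem_image] at hb
      obtain ⟨b₀, hb₀, rfl⟩ := hb
      exact lattice_bond_translate _ (hlat _ hb₀)
  · intro b hb x hx
    rcases Finset.mem_insert.mp hb with rfl | hb
    · rcases Sym2.mem_iff.mp hx with rfl | rfl
      · exact Finset.mem_insert_self _ _
      · refine Finset.mem_insert_of_mem (Finset.mem_image.mpr ⟨0, h0G, by simp⟩)
    · rw [Finset.mem_image] at hb
      obtain ⟨b₀, hb₀, rfl⟩ := hb
      rw [Sym2.mem_map] at hx
      obtain ⟨w, hw, rfl⟩ := hx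
      exact Finset.mem_insert_of_mem (Finset.mem_image.mpr ⟨w, hend _ hb₀ _ hw, rfl⟩)
  · -- connectivity: every site is connected to 0
    have hlift : ∀ a b : Site d, Adj G a b → Adj (addOne d G) (a + e1 d) (b + e1 d) := by
      intro a b hab
      exact Finset.mem_insert_of_mem (Finset.mem_image.mpr ⟨s(a, b), hab, Sym2.map_pair_eq _ _ _⟩)
    have hadj0 : Adj (addOne d G) 0 (e1 d) := Finset.mem_insert_self _ _
    have key : ∀ x ∈ (addOne d G).sites, Relation.ReflTransGen (Adj (addOne d G)) 0 x := by
      intro x hx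
      rcases Finset.mem_insert.mp hx with rfl | hx
      · exact Relation.ReflTransGen.refl
      · rw [Finset.mem_image] at hx
        obtain ⟨x₀, hx₀, rfl⟩ := hx
        have hpath : Relation.ReflTransGen (Adj (addOne d G)) (0 + e1 d) (x₀ + e1 d) :=
          Relation.ReflTransGen.lift (· + e1 d) hlift _ _ (hconn _ h0G _ hx₀)
        have : Relation.ReflTransGen (Adj (addOne d G)) 0 (x₀ + e1 d) := by
          refine Relation.ReflTransGen.head hadj0 ?_
          simpa using hpath
        exact this
    intro x hx y hy
    have hS : Symmetric (Relation.ReflTransGen (Adj (addOne d G))) :=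
      fun a b h => by
        haveI : Std.Symm (Adj (addOne d G)) := ⟨fun a b h => adj_symm h⟩
        exact Std.Symm.symm a b h
    exact (hS (key x hx)).trans (key y hy)

lemma addOne_card {G : PreGraph d} (hd : 0 < d) (hmin : LexMinAtOrigin G) :
    (addOne d G).sites.card = G.sites.card + 1 := by
  have h0 := zero_not_mem_image hd hmin
  simp only [addOne]
  rw [Finset.card_insert_of_notMem h0, Finset.card_image_of_injective _ addE1_injective]

lemma addOne_lexMin {G : PreGraph d} (hd : 0 < d) (hmin : LexMinAtOrigin G) :
    LexMinAtOrigin (addOne d G) := by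
  refine ⟨Finset.mem_insert_self _ _, ?_⟩
  intro x hx
  rcases Finset.mem_insert.mp hx with rfl | hx
  · exact Or.inl rfl
  · rw [Finset.mem_image] at hx
    obtain ⟨x₀, hx₀, rfl⟩ := hx
    exact Or.inr (lexlt_add hd hmin hx₀)

lemma addOne_injOn {G G' : PreGraph d} (hd : 0 < d)
    (hG : IsBondAnimal G) (hminG : LexMinAtOrigin G)
    (hG' : IsBondAnimal G') (hminG' : LexMinAtOrigin G')
    (h : addOne d G = addOne d G') : G = G' := by
  have hs : insert (0 : Site d) (G.sites.image (· + e1 d))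
      = insert 0 (G'.sites.image (· + e1 d)) := congrArg PreGraph.sites h
  have hb : insert s((0 : Site d), e1 d) (G.bonds.image (Sym2.map (· + e1 d)))
      = insert s((0 : Site d), e1 d) (G'.bonds.image (Sym2.map (· + e1 d))) :=
    congrArg PreGraph.bonds h
  have hsites : G.sites = G'.sites := by
    have := congrArg (fun t => Finset.erase t (0 : Site d)) hs
    simp only [] at this
    rw [Finset.erase_insert (zero_not_mem_image hd hminG),
      Finset.erase_insert (zero_not_mem_image hd hminG')] at this
    exact Finset.image_injective addE1_injective this
  have hbonds : G.bonds = G'.bonds := by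
    have := congrArg (fun t => Finset.erase t s((0 : Site d), e1 d)) hb
    simp only [] at this
    rw [Finset.erase_insert (bond_not_mem_image hd hG hminG),
      Finset.erase_insert (bond_not_mem_image hd hG' hminG')] at this
    exact Finset.image_injective (Sym2.map.injective addE1_injective) this
  cases G; cases G'; simp_all

lemma symmDiff_insert_card {α : Type*} [DecidableEq α] (a : α) (s : Finset α) (h : a ∉ s) :
    (symmDiff s (insert a s)).card = 1 := by
  have : symmDiff s (insert a s) = {a} := by
    ext x
    simp only [Finset.mem_symmDiff, Finset.mem_insert, Finset.mem_singleton]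
    constructor
    · rintro (⟨hx, h2⟩ | ⟨(rfl | hx), h2⟩) <;> tauto
    · rintro rfl; tauto
  rw [this, Finset.card_singleton]

lemma addOne_mem_Cstar {G : PreGraph d} {n : ℕ} (hd : 0 < d)
    (hG : G ∈ Cstar (IsBondAnimal (d := d)) n) :
    addOne d G ∈ Cstar (IsBondAnimal (d := d)) (n + 1) := by
  obtain ⟨hA, hcard, hmin⟩ := hG
  exact ⟨addOne_isBondAnimal hd hA hmin, by rw [addOne_card hd hmin, hcard],
    addOne_lexMin hd hmin⟩

end Aux

/-- **Bounded downward ratios for weighted bond animals** (Proposition 3.5 for bond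
animals on `ℤ^d`): there is `Υ > 0` with `𝒢ₙ₊₁ ≥ Υ 𝒢ₙ` for all large `n`. -/
theorem downward_ratio_bond_animals
    (d : ℕ) (hd : 2 ≤ d)
    (wt : PreGraph d → ℝ≥0∞) (hwt : IsWeight IsBondAnimal wt) :
    ∃ Υ : ℝ≥0∞, 0 < Υ ∧ ∃ N : ℕ, ∀ n ≥ N,
      Υ * Gsum (Cstar (IsBondAnimal (d := d)) n) wt
        ≤ Gsum (Cstar (IsBondAnimal (d := d)) (n + 1)) wt := by
  have hd0 : 0 < d := by omega
  obtain ⟨hpos, htrans, hCA2⟩ := hwt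
  obtain ⟨γ, hγ0, hγtop, hγ⟩ := hCA2 2
  refine ⟨γ⁻¹, ENNReal.inv_pos.mpr hγtop, 0, fun n _ => ?_⟩
  set Cn := Cstar (IsBondAnimal (d := d)) n with hCn
  set Cn1 := Cstar (IsBondAnimal (d := d)) (n + 1) with hCn1
  -- the injection
  have hmem : ∀ G ∈ Cn, addOne d G ∈ Cn1 := fun G hG => addOne_mem_Cstar hd0 hG
  -- weight bound
  have hwtle : ∀ G ∈ Cn, γ⁻¹ * wt G ≤ wt (addOne d G) := by
    intro G hG
    obtain ⟨hA, hcard, hmin⟩ := hG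
    have htr : IsBondAnimal (translateCluster G (e1 d)) := translate_isBondAnimal _ hA
    have hA' : IsBondAnimal (addOne d G) := addOne_isBondAnimal hd0 hA hmin
    have hdiff : (symmDiff (translateCluster G (e1 d)).sites (addOne d G).sites).card
        + (symmDiff (translateCluster G (e1 d)).bonds (addOne d G).bonds).card ≤ 2 := by
      have h1 := symmDiff_insert_card (0 : Site d) (G.sites.image (· + e1 d))
        (zero_not_mem_image hd0 hmin)
      have h2 := symmDiff_insert_card (s((0 : Site d), e1 d))
        (G.bonds.image (Sym2.map (· + e1 d))) (bond_not_mem_image hd0 hA hmin)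
      simp only [translateCluster, addOne] at *
      omega
    have := (hγ _ _ htr hA' hdiff).1
    rw [htrans G (e1 d), ENNReal.div_eq_inv_mul] at this
    exact this
  -- injectivity
  let ι : Cn → Cn1 := fun G => ⟨addOne d G.1, hmem _ G.2⟩
  have hι : Function.Injective ι := by
    rintro ⟨G, hG⟩ ⟨G', hG'⟩ hGG'
    have : addOne d G = addOne d G' := congrArg Subtype.val hGG'
    exact Subtype.ext (addOne_injOn hd0 hG.1 hG.2.2 hG'.1 hG'.2.2 this)
  calc γ⁻¹ * Gsum Cn wt = ∑' G : Cn, γ⁻¹ * wt G.1 := by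
        rw [Gsum, ENNReal.tsum_mul_left]
    _ ≤ ∑' G : Cn, wt (ι G).1 := ENNReal.tsum_le_tsum fun G => hwtle _ G.2
    _ ≤ ∑' H : Cn1, wt H.1 :=
        ENNReal.tsum_comp_le_tsum_of_injective hι (fun H : Cn1 => wt H.1)
    _ = Gsum Cn1 wt := rfl
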